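/- Let X₁, X₂, …, Xₙ be {0,1}-valued random variables on a probability space such that for some real δ with 0 ≤ δ ≤ 1 and for every subset S ⊆ {1,…,n}, P(X_i = 1 for all i ∈ S) ≤ δ^{|S|}. Then for every real γ with δ ≤ γ ≤ 1, P(X₁ + ⋯ + Xₙ ≥ γn) ≤ e^{−2n(γ−δ)²}. -/

import Mathlib

open Real

private lemma chernoff_hasDerivG {x : ℝ} (hx0 : 0 < x) (hx1 : x < 1) :
    HasDerivAt (fun y => Real.log y - Real.log (1-y) - 4*y)
      (1/x + 1/(1-x) - 4) x := by
  have hlog : HasDerivAt Real.log (1/x) x := by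
    simpa using Real.hasDerivAt_log (ne_of_gt hx0)
  have hlog2 : HasDerivAt (fun y => Real.log (1-y)) ((-1)/(1-x)) x := by
    have h1x : HasDerivAt (fun y : ℝ => 1 - y) (-1) x := by
      simpa using (hasDerivAt_id x).const_sub 1
    have := (Real.hasDerivAt_log (by linarith : (1:ℝ)-x ≠ 0)).comp x h1x
    exact this.congr_deriv (by ring)
  have h4 : HasDerivAt (fun y : ℝ => 4*y) 4 x := by
    simpa using (hasDerivAt_id x).const_mul 4
  have := (hlog.sub hlog2).sub h4
  exact this.congr_deriv (by ring)

private lemma chernoff_G_mono {a b : ℝ} (ha : 0 < a) (hb : b < 1) (hab : a ≤ b) :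
    Real.log a - Real.log (1-a) - 4*a ≤ Real.log b - Real.log (1-b) - 4*b := by
  have hmono : MonotoneOn (fun y => Real.log y - Real.log (1-y) - 4*y) (Set.Icc a b) := by
    apply monotoneOn_of_deriv_nonneg (convex_Icc a b)
    · apply ContinuousOn.sub
      apply ContinuousOn.sub
      · exact (Real.continuousOn_log.mono (by
          intro x hx; simp only [Set.mem_compl_iff, Set.mem_singleton_iff]
          exact ne_of_gt (lt_of_lt_of_le ha hx.1)))
      · apply Real.continuousOn_log.comp (by fun_prop)
        intro x hx
        simp only [Set.mem_compl_iff, Set.mem_singleton_iff]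
        nlinarith [hx.2]
      · fun_prop
    · intro x hx
      rw [interior_Icc] at hx
      exact (chernoff_hasDerivG (lt_trans ha hx.1) (lt_trans hx.2 hb)).differentiableAt.differentiableWithinAt
    · intro x hx
      rw [interior_Icc] at hx
      have hx0 : 0 < x := lt_trans ha hx.1
      have hx1 : x < 1 := lt_trans hx.2 hb
      rw [(chernoff_hasDerivG hx0 hx1).deriv]
      have hpos : 0 < x*(1-x) := mul_pos hx0 (by linarith)
      have h4 : x*(1-x) ≤ 1/4 := by nlinarith [sq_nonneg (2*x-1)]
      have hsum : 1/x + 1/(1-x) = 1/(x*(1-x)) := by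
        rw [div_add_div _ _ (ne_of_gt hx0) (by linarith : (1:ℝ)-x ≠ 0)]
        ring_nf
      have hle := one_div_le_one_div_of_le hpos h4
      rw [hsum]
      have h14 : (1:ℝ)/(1/4) = 4 := by norm_num
      linarith [h14 ▸ hle]
  have := hmono (Set.left_mem_Icc.mpr hab) (Set.right_mem_Icc.mpr hab) hab
  simpa using this

private lemma chernoff_pinsker {δ γ : ℝ} (hδ0 : 0 < δ) (hδ1 : δ < 1) (hδγ : δ ≤ γ) (hγ1 : γ ≤ 1) :
    2*(γ-δ)^2 ≤ γ * Real.log γ - γ * Real.log δ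
      + (1-γ) * Real.log (1-γ) - (1-γ) * Real.log (1-δ) := by
  set F : ℝ → ℝ := fun x => x * Real.log x - x * Real.log δ + (1-x) * Real.log (1-x)
      - (1-x) * Real.log (1-δ) - 2*(x-δ)^2 with hF
  have hcont : Continuous F := by
    have c1 : Continuous (fun x : ℝ => x * Real.log x) := Real.continuous_mul_log
    have c2 : Continuous (fun x : ℝ => (1-x) * Real.log (1-x)) :=
      Real.continuous_mul_log.comp (continuous_const.sub continuous_id)
    exact (((c1.sub (continuous_id.mul continuous_const)).add c2).sub
      ((continuous_const.sub continuous_id).mul continuous_const)).sub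
      (continuous_const.mul ((continuous_id.sub continuous_const).pow 2))
  have hderiv : ∀ x ∈ Set.Ioo δ 1, HasDerivAt F
      (Real.log x + 1 - Real.log δ - (Real.log (1-x) + 1) + Real.log (1-δ) - 2*(2*(x-δ))) x := by
    intro x hx
    have hx0 : 0 < x := lt_of_lt_of_le hδ0 hx.1.le
    have hx1 : x < 1 := hx.2
    have hA : HasDerivAt (fun y : ℝ => y * Real.log y) (Real.log x + 1) x :=
      Real.hasDerivAt_mul_log (ne_of_gt hx0)
    have hB : HasDerivAt (fun y : ℝ => y * Real.log δ) (Real.log δ) x := by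
      simpa using (hasDerivAt_id x).mul_const (Real.log δ)
    have h1x : HasDerivAt (fun y : ℝ => 1 - y) (-1) x := by
      simpa using (hasDerivAt_id x).const_sub 1
    have hC : HasDerivAt (fun y : ℝ => (1-y) * Real.log (1-y))
        ((Real.log (1-x) + 1) * (-1)) x :=
      (Real.hasDerivAt_mul_log (by linarith : (1:ℝ)-x ≠ 0)).comp x h1x
    have hD : HasDerivAt (fun y : ℝ => (1-y) * Real.log (1-δ)) ((-1) * Real.log (1-δ)) x :=
      h1x.mul_const (Real.log (1-δ))
    have hE : HasDerivAt (fun y : ℝ => 2*(y-δ)^2) (2*(2*(x-δ))) x := by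
      have := (((hasDerivAt_id x).sub_const δ).pow 2).const_mul (2:ℝ)
      simpa using this
    have := (((hA.sub hB).add hC).sub hD).sub hE
    exact this.congr_deriv (by ring)
  have hmono : MonotoneOn F (Set.Icc δ 1) := by
    apply monotoneOn_of_deriv_nonneg (convex_Icc δ 1) hcont.continuousOn
    · intro x hx
      rw [interior_Icc] at hx
      exact ((hderiv x hx).differentiableAt).differentiableWithinAt
    · intro x hx
      rw [interior_Icc] at hx
      rw [(hderiv x hx).deriv]
      have hGm := chernoff_G_mono hδ0 hx.2 hx.1.le
      linarith
  have h0 : F δ = 0 := by simp only [hF]; ring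
  have h1 : F δ ≤ F γ := hmono (Set.left_mem_Icc.mpr (le_trans hδγ hγ1))
    (Set.mem_Icc.mpr ⟨hδγ, hγ1⟩) hδγ
  rw [h0] at h1
  simp only [hF] at h1
  linarith
open MeasureTheory

-- product of 0/1 variables is the indicator of all-ones event
private lemma chernoff_lintegral_prod {Ω : Type*} [MeasurableSpace Ω] (μ : Measure Ω)
    (n : ℕ) (X : Fin n → Ω → ℝ) (hmeas : ∀ i, Measurable (X i))
    (h01 : ∀ i ω, X i ω = 0 ∨ X i ω = 1) (S : Finset (Fin n)) :
    ∫⁻ ω, ENNReal.ofReal (∏ i ∈ S, X i ω) ∂μ = μ {ω | ∀ i ∈ S, X i ω = 1} := by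
  have hset : MeasurableSet {ω | ∀ i ∈ S, X i ω = 1} := by
    have : {ω | ∀ i ∈ S, X i ω = 1} = ⋂ i ∈ S, (X i)⁻¹' {1} := by
      ext ω; simp [Set.mem_iInter, Set.mem_preimage]
    rw [this]
    exact MeasurableSet.biInter S.countable_toSet
      (fun i _ => (hmeas i) (measurableSet_singleton 1))
  have hpt : ∀ ω, ENNReal.ofReal (∏ i ∈ S, X i ω)
      = Set.indicator {ω | ∀ i ∈ S, X i ω = 1} (fun _ => 1) ω := by
    intro ω
    by_cases h : ∀ i ∈ S, X i ω = 1
    · rw [Set.indicator_of_mem (show ω ∈ {ω | ∀ i ∈ S, X i ω = 1} from h)]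
      rw [Finset.prod_congr rfl h]
      simp
    · rw [Set.indicator_of_notMem (show ω ∉ {ω | ∀ i ∈ S, X i ω = 1} from h)]
      push_neg at h
      obtain ⟨i, hiS, hi⟩ := h
      have : X i ω = 0 := (h01 i ω).resolve_right hi
      rw [Finset.prod_eq_zero hiS this]
      simp
  simp_rw [hpt]
  rw [lintegral_indicator hset]
  simp [hset]

private lemma chernoff_mgf {Ω : Type*} [MeasurableSpace Ω] (μ : Measure Ω)
    (n : ℕ) (X : Fin n → Ω → ℝ) (hmeas : ∀ i, Measurable (X i))
    (h01 : ∀ i ω, X i ω = 0 ∨ X i ω = 1)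
    (δ : ℝ) (hδ0 : 0 ≤ δ)
    (hneg : ∀ S : Finset (Fin n),
      μ {ω | ∀ i ∈ S, X i ω = 1} ≤ ENNReal.ofReal (δ ^ S.card))
    (t : ℝ) (ht : 0 ≤ t) :
    ∫⁻ ω, ENNReal.ofReal (∏ i, (1 + t * X i ω)) ∂μ ≤ ENNReal.ofReal ((1 + t*δ)^n) := by
  have hX0 : ∀ i ω, 0 ≤ X i ω := by
    intro i ω; rcases h01 i ω with h | h <;> rw [h] <;> norm_num
  have hprodnn : ∀ (S : Finset (Fin n)) ω, 0 ≤ ∏ i ∈ S, X i ω :=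
    fun S ω => Finset.prod_nonneg fun i _ => hX0 i ω
  have hprodmeas : ∀ S : Finset (Fin n), Measurable (fun ω => ∏ i ∈ S, X i ω) :=
    fun S => Finset.measurable_prod S (fun i _ => hmeas i)
  have hexp : ∀ ω, ∏ i, (1 + t * X i ω)
      = ∑ S ∈ Finset.univ.powerset, t^S.card * ∏ i ∈ S, X i ω := by
    intro ω
    have h1 := Finset.prod_add (fun i => t * X i ω) (fun _ => (1:ℝ)) Finset.univ
    simp only [Finset.prod_const_one, mul_one] at h1
    calc ∏ i, (1 + t * X i ω) = ∏ i, (t * X i ω + 1) := by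
          exact Finset.prod_congr rfl fun i _ => add_comm _ _
      _ = ∑ S ∈ Finset.univ.powerset, ∏ i ∈ S, (t * X i ω) := h1
      _ = ∑ S ∈ Finset.univ.powerset, t^S.card * ∏ i ∈ S, X i ω := by
          refine Finset.sum_congr rfl fun S _ => ?_
          rw [Finset.prod_mul_distrib, Finset.prod_const]
  have hbin : (1 + t*δ)^n = ∑ S ∈ (Finset.univ : Finset (Fin n)).powerset, (t*δ)^S.card := by
    have h2 := Finset.prod_add (fun _ : Fin n => t*δ) (fun _ : Fin n => (1:ℝ)) Finset.univ
    simp only [Finset.prod_const_one, mul_one, Finset.prod_const, Finset.card_univ,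
      Fintype.card_fin] at h2
    rw [show (1:ℝ) + t*δ = t*δ + 1 by ring, h2]
  calc ∫⁻ ω, ENNReal.ofReal (∏ i, (1 + t * X i ω)) ∂μ
      = ∫⁻ ω, ∑ S ∈ Finset.univ.powerset,
          ENNReal.ofReal (t^S.card * ∏ i ∈ S, X i ω) ∂μ := by
        refine lintegral_congr fun ω => ?_
        rw [hexp ω, ENNReal.ofReal_sum_of_nonneg]
        intro S _
        exact mul_nonneg (pow_nonneg ht _) (hprodnn S ω)
    _ = ∑ S ∈ Finset.univ.powerset, ∫⁻ ω,
          ENNReal.ofReal (t^S.card * ∏ i ∈ S, X i ω) ∂μ := by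
        refine lintegral_finset_sum _ fun S _ => ?_
        exact ((measurable_const.mul (hprodmeas S))).ennreal_ofReal
    _ = ∑ S ∈ Finset.univ.powerset, ENNReal.ofReal (t^S.card)
          * ∫⁻ ω, ENNReal.ofReal (∏ i ∈ S, X i ω) ∂μ := by
        refine Finset.sum_congr rfl fun S _ => ?_
        simp_rw [ENNReal.ofReal_mul (pow_nonneg ht _)]
        rw [lintegral_const_mul _ ((hprodmeas S).ennreal_ofReal)]
    _ ≤ ∑ S ∈ Finset.univ.powerset, ENNReal.ofReal (t^S.card)
          * ENNReal.ofReal (δ^S.card) := by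
        refine Finset.sum_le_sum fun S _ => ?_
        refine mul_le_mul_right ?_ _
        rw [chernoff_lintegral_prod μ n X hmeas h01 S]
        exact hneg S
    _ = ∑ S ∈ Finset.univ.powerset, ENNReal.ofReal ((t*δ)^S.card) := by
        refine Finset.sum_congr rfl fun S _ => ?_
        rw [← ENNReal.ofReal_mul (pow_nonneg ht _), ← mul_pow]
    _ = ENNReal.ofReal ((1 + t*δ)^n) := by
        rw [hbin, ENNReal.ofReal_sum_of_nonneg]
        intro S _
        exact pow_nonneg (mul_nonneg ht hδ0) _

theorem stmt15 {Ω : Type*} [MeasurableSpace Ω] (μ : Measure Ω) [IsProbabilityMeasure μ]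
    (n : ℕ) (X : Fin n → Ω → ℝ)
    (hmeas : ∀ i, Measurable (X i))
    (h01 : ∀ i ω, X i ω = 0 ∨ X i ω = 1)
    (δ : ℝ) (hδ0 : 0 ≤ δ) (hδ1 : δ ≤ 1)
    (hneg : ∀ S : Finset (Fin n),
      μ {ω | ∀ i ∈ S, X i ω = 1} ≤ ENNReal.ofReal (δ ^ S.card))
    (γ : ℝ) (hδγ : δ ≤ γ) (hγ1 : γ ≤ 1) :
    μ {ω | γ * n ≤ ∑ i, X i ω} ≤ ENNReal.ofReal (Real.exp (-2 * n * (γ - δ)^2)) := by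
  have hX0 : ∀ i ω, 0 ≤ X i ω := by
    intro i ω; rcases h01 i ω with h | h <;> rw [h] <;> norm_num
  have hX1 : ∀ i ω, X i ω ≤ 1 := by
    intro i ω; rcases h01 i ω with h | h <;> rw [h] <;> norm_num
  have htriv : ∀ (c : ℝ), 0 ≤ c → μ {ω | γ * n ≤ ∑ i, X i ω} ≤ ENNReal.ofReal (Real.exp c) := by
    intro c hc
    calc μ {ω | γ * n ≤ ∑ i, X i ω} ≤ 1 := prob_le_one
      _ ≤ ENNReal.ofReal (Real.exp c) := by
          rw [show (1 : ENNReal) = ENNReal.ofReal 1 by simp]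
          exact ENNReal.ofReal_le_ofReal (Real.one_le_exp hc)
  -- trivial case n = 0
  rcases Nat.eq_zero_or_pos n with hn0 | hn
  · subst hn0
    apply htriv
    norm_num
  -- trivial case γ = δ
  by_cases hγδ : γ = δ
  · subst hγδ
    apply htriv
    norm_num
  have hδγlt : δ < γ := lt_of_le_of_ne hδγ (fun h => hγδ h.symm)
  -- case δ = 0 : union bound
  by_cases hδz : δ = 0
  · subst hδz
    have hγpos : 0 < γ := hδγlt
    have hsub : {ω | γ * n ≤ ∑ i, X i ω} ⊆ ⋃ i, {ω | X i ω = 1} := by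
      intro ω hω
      by_contra hc
      simp only [Set.mem_iUnion, Set.mem_setOf_eq, not_exists] at hc
      have hz : ∑ i, X i ω = 0 := Finset.sum_eq_zero fun i _ => (h01 i ω).resolve_right (hc i)
      have h1 : γ * n ≤ 0 := by rw [← hz]; exact hω
      have h2 : (0:ℝ) < γ * n := mul_pos hγpos (by exact_mod_cast hn)
      linarith
    have hzero : ∀ i : Fin n, μ {ω | X i ω = 1} = 0 := by
      intro i
      have := hneg {i}
      simp only [Finset.mem_singleton, Finset.card_singleton, pow_one] at this
      refine le_antisymm ?_ (zero_le)
      calc μ {ω | X i ω = 1} = μ {ω | ∀ j, j = i → X j ω = 1} := by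
            congr 1; ext ω; simp only [Set.mem_setOf_eq]
            constructor
            · rintro h j rfl; exact h
            · intro h; exact h i rfl
        _ ≤ ENNReal.ofReal 0 := this
        _ = 0 := by simp
    calc μ {ω | γ * n ≤ ∑ i, X i ω} ≤ μ (⋃ i, {ω | X i ω = 1}) := measure_mono hsub
      _ ≤ ∑' i, μ {ω | X i ω = 1} := measure_iUnion_le _
      _ = 0 := by simp [hzero]
      _ ≤ _ := zero_le
  have hδpos : 0 < δ := lt_of_le_of_ne hδ0 (Ne.symm hδz)
  -- case γ = 1
  by_cases hγe1 : γ = 1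
  · subst hγe1
    have hδlt1 : δ < 1 := hδγlt
    have hsub : {ω | 1 * (n:ℝ) ≤ ∑ i, X i ω} ⊆ {ω | ∀ i ∈ Finset.univ, X i ω = 1} := by
      intro ω hω
      intro i _
      by_contra hne
      have hXi0 : X i ω = 0 := (h01 i ω).resolve_right hne
      have hsplit : ∑ j, X j ω = X i ω + ∑ j ∈ Finset.univ.erase i, X j ω :=
        (Finset.add_sum_erase _ _ (Finset.mem_univ i)).symm
      have hle : ∑ j ∈ Finset.univ.erase i, X j ω ≤ ((Finset.univ.erase i).card : ℝ) * 1 := by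
        have := Finset.sum_le_card_nsmul (Finset.univ.erase i) (fun j => X j ω) 1
          (fun j _ => hX1 j ω)
        simpa [nsmul_eq_mul] using this
      have hcard : ((Finset.univ.erase i).card : ℝ) = (n : ℝ) - 1 := by
        rw [Finset.card_erase_of_mem (Finset.mem_univ i), Finset.card_univ, Fintype.card_fin]
        rw [Nat.cast_sub hn]
        norm_num
      have hω' : (n:ℝ) ≤ ∑ j, X j ω := by simpa using hω
      rw [hsplit, hXi0, zero_add] at hω'
      rw [hcard] at hle
      linarith
    have hpin := chernoff_pinsker hδpos hδlt1 hδ1 (le_refl 1)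
    simp only [Real.log_one, sub_self, zero_mul, mul_zero, mul_one, sub_zero, add_zero] at hpin
    -- hpin : 2*(1-δ)^2 ≤ -Real.log δ  (after simp)
    calc μ {ω | 1 * (n:ℝ) ≤ ∑ i, X i ω}
        ≤ μ {ω | ∀ i ∈ Finset.univ, X i ω = 1} := measure_mono hsub
      _ ≤ ENNReal.ofReal (δ ^ (Finset.univ : Finset (Fin n)).card) := hneg Finset.univ
      _ = ENNReal.ofReal (δ ^ n) := by rw [Finset.card_univ, Fintype.card_fin]
      _ ≤ ENNReal.ofReal (Real.exp (-2 * n * (1 - δ)^2)) := by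
          apply ENNReal.ofReal_le_ofReal
          have hδn : δ ^ n = Real.exp ((n:ℝ) * Real.log δ) := by
            rw [Real.exp_nat_mul, Real.exp_log hδpos]
          rw [hδn]
          apply Real.exp_le_exp.mpr
          have hn0 : (0:ℝ) ≤ n := Nat.cast_nonneg n
          nlinarith
  have hγlt1 : γ < 1 := lt_of_le_of_ne hγ1 hγe1
  have hγpos : 0 < γ := lt_of_le_of_lt hδ0 hδγlt
  -- main case : 0 < δ < γ < 1
  set T := {ω | γ * n ≤ ∑ i, X i ω} with hT
  have hTmeas : MeasurableSet T :=
    measurableSet_le measurable_const (Finset.measurable_sum _ fun i _ => hmeas i)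
  set t := (γ - δ)/(δ*(1-γ)) with htdef
  have ht : 0 < t := div_pos (by linarith) (mul_pos hδpos (by linarith))
  have hb0 : (0:ℝ) < 1 + t := by linarith
  -- pointwise lower bound on T
  have hlow : ∀ ω ∈ T, Real.exp (γ * n * Real.log (1+t)) ≤ ∏ i, (1 + t * X i ω) := by
    intro ω hω
    have hprod : ∏ i, (1 + t * X i ω) = Real.exp ((∑ i, X i ω) * Real.log (1+t)) := by
      rw [Finset.sum_mul, Real.exp_sum]
      refine Finset.prod_congr rfl fun i _ => ?_
      rcases h01 i ω with h | h <;> rw [h] <;> simp [Real.exp_log hb0]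
    rw [hprod]
    apply Real.exp_le_exp.mpr
    exact mul_le_mul_of_nonneg_right hω (Real.log_nonneg (by linarith))
  -- key inequality
  have key : ENNReal.ofReal (Real.exp (γ * n * Real.log (1+t))) * μ T
      ≤ ENNReal.ofReal ((1 + t*δ)^n) := by
    calc ENNReal.ofReal (Real.exp (γ * n * Real.log (1+t))) * μ T
        = ∫⁻ _ in T, ENNReal.ofReal (Real.exp (γ * n * Real.log (1+t))) ∂μ :=
          (setLIntegral_const T _).symm
      _ ≤ ∫⁻ ω in T, ENNReal.ofReal (∏ i, (1 + t * X i ω)) ∂μ := by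
          apply setLIntegral_mono
          · exact (Finset.measurable_prod _ fun i _ =>
              measurable_const.add (measurable_const.mul (hmeas i))).ennreal_ofReal
          · intro ω hω
            exact ENNReal.ofReal_le_ofReal (hlow ω hω)
      _ ≤ ∫⁻ ω, ENNReal.ofReal (∏ i, (1 + t * X i ω)) ∂μ := setLIntegral_le_lintegral _ _
      _ ≤ ENNReal.ofReal ((1 + t*δ)^n) := chernoff_mgf μ n X hmeas h01 δ hδ0 hneg t ht.le
  -- analytic comparison
  have hreal : (1 + t*δ)^n ≤ Real.exp (-2 * n * (γ - δ)^2) * Real.exp (γ * n * Real.log (1+t)) := by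
    have h1γ : (1:ℝ) - γ ≠ 0 := by linarith
    have hdne : δ*(1-γ) ≠ 0 := mul_ne_zero (ne_of_gt hδpos) h1γ
    have ht' : t * (δ*(1-γ)) = γ - δ := div_mul_cancel₀ _ hdne
    have ha : 1 + t*δ = (1-δ)/(1-γ) := by
      rw [eq_div_iff h1γ]
      linear_combination ht'
    have hbv : 1 + t = γ*(1-δ)/(δ*(1-γ)) := by
      rw [eq_div_iff hdne]
      linear_combination ht'
    have hane : (0:ℝ) < (1-δ)/(1-γ) := div_pos (by linarith) (by linarith)
    have hloga : Real.log (1 + t*δ) = Real.log (1-δ) - Real.log (1-γ) := by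
      rw [ha, Real.log_div (by linarith) (by linarith)]
    have hlogb : Real.log (1 + t) =
        Real.log γ + Real.log (1-δ) - Real.log δ - Real.log (1-γ) := by
      rw [hbv, Real.log_div (ne_of_gt (mul_pos hγpos (by linarith))) hdne,
        Real.log_mul (ne_of_gt hγpos) (by linarith),
        Real.log_mul (ne_of_gt hδpos) (by linarith)]
      ring
    have hpin := chernoff_pinsker hδpos (by linarith) hδγ hγ1
    have hunit : Real.log (1 + t*δ) + 2*(γ-δ)^2 ≤ γ * Real.log (1+t) := by
      rw [hloga, hlogb]
      nlinarith [hpin]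
    have hn0 : (0:ℝ) ≤ n := Nat.cast_nonneg n
    have hmul := mul_le_mul_of_nonneg_left hunit hn0
    have hexp : (1 + t*δ)^n = Real.exp ((n:ℝ) * Real.log (1 + t*δ)) := by
      rw [Real.exp_nat_mul, Real.exp_log (by rw [ha]; exact hane)]
    rw [hexp, ← Real.exp_add]
    apply Real.exp_le_exp.mpr
    nlinarith [hmul]
  -- combine
  have hc0 : ENNReal.ofReal (Real.exp (γ * n * Real.log (1+t))) ≠ 0 := by
    simp [Real.exp_pos]
  have hctop : ENNReal.ofReal (Real.exp (γ * n * Real.log (1+t))) ≠ ⊤ := ENNReal.ofReal_ne_top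
  rw [← ENNReal.mul_le_mul_iff_left hc0 hctop]
  calc μ T * ENNReal.ofReal (Real.exp (γ * n * Real.log (1+t)))
      = ENNReal.ofReal (Real.exp (γ * n * Real.log (1+t))) * μ T := mul_comm _ _
    _ ≤ ENNReal.ofReal ((1 + t*δ)^n) := key
    _ ≤ ENNReal.ofReal (Real.exp (-2 * n * (γ - δ)^2) * Real.exp (γ * n * Real.log (1+t))) :=
        ENNReal.ofReal_le_ofReal hreal
    _ = ENNReal.ofReal (Real.exp (-2 * n * (γ - δ)^2))
        * ENNReal.ofReal (Real.exp (γ * n * Real.log (1+t))) :=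
        ENNReal.ofReal_mul (Real.exp_nonneg _)
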